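/- Let x, y be a heavy pair (in particular an independent pair, both non-leaves of T, both ≠ s, with G \ {x} and G \ {y} connected). Then G \ {x,y} is connected if and only if at least one of the heavy children x_h, y_h is connected to the source s in G \ {x,y}. -/

import Mathlib

/-- A rooted spanning tree of the graph `G`, given by a root and a parent function:
the root is a fixed point of `parent`, every vertex reaches the root by iterating
`parent`, and every (parent, child) pair is an edge of `G`. -/
structure RSTree {V : Type*} (G : SimpleGraph V) where
  root : V
  parent : V → V
  parent_root : parent root = root
  reaches : ∀ v : V, ∃ n : ℕ, parent^[n] v = root
  adj : ∀ v : V, v ≠ root → G.Adj (parent v) v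

namespace RSTree

variable {V : Type*} {G : SimpleGraph V}

/-- `u` is an ancestor of `v` in `T`, i.e. `u` lies on the tree path `π(root, v)`;
includes `u = v`. -/
def Anc (T : RSTree G) (u v : V) : Prop := ∃ n : ℕ, T.parent^[n] v = u

/-- The vertex set `V(T_x)` of the subtree of `T` rooted at `x`. -/
def sub (T : RSTree G) (x : V) : Set V := {v | T.Anc x v}

/-- `c` is a child of `v` in `T`. -/
def IsChild (T : RSTree G) (c v : V) : Prop := T.parent c = v ∧ c ≠ v

/-- `V_x = V(T_x) \ {x}`. -/
def Vx (T : RSTree G) (x : V) : Set V := {v | T.Anc x v ∧ v ≠ x}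

end RSTree

/-- `v` and `w` are connected by a walk of `G` all of whose vertices lie in `S`
(i.e. they lie in the same connected component of the induced subgraph `G[S]`). -/
def ReachableWithin {V : Type*} (G : SimpleGraph V) (S : Set V) (v w : V) : Prop :=
  ∃ p : G.Walk v w, ∀ u ∈ p.support, u ∈ S

/-- `C` is (the vertex set of) a connected component of the induced subgraph `G[S]`. -/
def IsCompOf {V : Type*} (G : SimpleGraph V) (S : Set V) (C : Set V) : Prop :=
  ∃ v ∈ S, C = {w | ReachableWithin G S v w}

/-- The connected component of `v` in the induced subgraph `G[S]` (as a vertex set). -/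
def CompOfVert {V : Type*} (G : SimpleGraph V) (S : Set V) (v : V) : Set V :=
  {w | ReachableWithin G S v w}

/-- The vertex set of the path `π_x(s,C) = π(s, u_C) ∘ (u_C, v_C)` associated to a
component `C` (given the choice functions `uc, vc` of the edge `(u_C, v_C)`): it
consists of all ancestors of `u_C` together with `v_C`. -/
def CompPath {V : Type*} {G : SimpleGraph V} (T : RSTree G)
    (uc vc : Set V → V) (C : Set V) : Set V :=
  {w | T.Anc w (uc C)} ∪ {vc C}

/-- `C ∈ 𝒞_x` is pseudo-`y`-sensitive: the path `π_x(s,C)` contains a tree edge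
`(y, y')` from `y` to a child `y'` of `y` such that `x` does not lie on
`π_y(s, C_{y,y'})`. Here `ucx, vcx` are the edge choices for components of `G[V_x]`
and `ucy, vcy` those for components of `G[V_y]`. -/
def PseudoSens {V : Type*} {G : SimpleGraph V} (T : RSTree G)
    (ucx vcx ucy vcy : Set V → V) (x y : V) (C : Set V) : Prop :=
  ∃ y', T.IsChild y' y ∧ T.Anc y' (ucx C) ∧
    x ∉ CompPath T ucy vcy (CompOfVert G (T.Vx y) y')

/-- `C ∈ 𝒞_x` is fully-`y`-sensitive: `y` lies on `π_x(s,C)` (i.e. `C` is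
`y`-sensitive) and `C` is not pseudo-`y`-sensitive. -/
def FullySens {V : Type*} {G : SimpleGraph V} (T : RSTree G)
    (ucx vcx ucy vcy : Set V → V) (x y : V) (C : Set V) : Prop :=
  y ∈ CompPath T ucx vcx C ∧ ¬ PseudoSens T ucx vcx ucy vcy x y C

/-- `hch` is a valid designation of heavy children: for every non-leaf vertex `v`,
`hch v` is a child of `v` whose subtree has the maximum number of vertices among all
children of `v`. -/
def HchValid {V : Type*} {G : SimpleGraph V} (T : RSTree G) (hch : V → V) : Prop :=
  ∀ v : V, (∃ c, T.IsChild c v) →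
    T.IsChild (hch v) v ∧ ∀ c, T.IsChild c v → (T.sub c).ncard ≤ (T.sub (hch v)).ncard

/-- The family `uc, vc` of edge choices is valid: for every `x ≠ s` with `G \ {x}`
connected and every connected component `C` of `G[V_x]`, `(uc x C, vc x C)` is an edge
of `G` with `vc x C ∈ C` and `uc x C ∉ V(T_x)`. -/
def GoodChoice {V : Type*} (G : SimpleGraph V) (T : RSTree G)
    (uc vc : V → Set V → V) : Prop :=
  ∀ x : V, x ≠ T.root → (G.induce (({x} : Set V)ᶜ)).Connected →
    ∀ C, IsCompOf G (T.Vx x) C →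
      G.Adj (uc x C) (vc x C) ∧ vc x C ∈ C ∧ uc x C ∉ T.sub x

/-- `x, y` is a heavy pair: an independent pair, both non-leaves of `T`, both `≠ s`,
with `G \ {x}` and `G \ {y}` connected, such that every fully-`y`-sensitive component
`C ∈ FS(x,y)` has the tree edge `(y, y_h)` on `π_x(s,C)` and every fully-`x`-sensitive
component `C ∈ FS(y,x)` has the tree edge `(x, x_h)` on `π_y(s,C)`. -/
def HeavyPair {V : Type*} {G : SimpleGraph V} (T : RSTree G) (hch : V → V)
    (uc vc : V → Set V → V) (x y : V) : Prop :=
  x ≠ T.root ∧ y ≠ T.root ∧ ¬ T.Anc x y ∧ ¬ T.Anc y x ∧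
  T.IsChild (hch x) x ∧ T.IsChild (hch y) y ∧
  (G.induce (({x} : Set V)ᶜ)).Connected ∧ (G.induce (({y} : Set V)ᶜ)).Connected ∧
  (∀ C, IsCompOf G (T.Vx x) C → FullySens T (uc x) (vc x) (uc y) (vc y) x y C →
    T.Anc (hch y) (uc x C)) ∧
  (∀ C, IsCompOf G (T.Vx y) C → FullySens T (uc y) (vc y) (uc x) (vc x) y x C →
    T.Anc (hch x) (uc y C))

section Aux

open SimpleGraph

variable {V : Type*} {G : SimpleGraph V}

namespace RSTree

lemma root_fixed (T : RSTree G) (n : ℕ) : T.parent^[n] T.root = T.root := by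
  induction n with
  | zero => rfl
  | succ n ih => rw [Function.iterate_succ_apply', ih, T.parent_root]

lemma anc_refl (T : RSTree G) (v : V) : T.Anc v v := ⟨0, rfl⟩

lemma anc_trans (T : RSTree G) {a b c : V} (h1 : T.Anc a b) (h2 : T.Anc b c) :
    T.Anc a c := by
  obtain ⟨m, hm⟩ := h1; obtain ⟨n, hn⟩ := h2
  exact ⟨m + n, by rw [Function.iterate_add_apply, hn, hm]⟩

lemma child_anc (T : RSTree G) {c v : V} (h : T.IsChild c v) : T.Anc v c :=
  ⟨1, h.1⟩

lemma not_anc_child (T : RSTree G) {c v : V} (h : T.IsChild c v) : ¬ T.Anc c v := by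
  rintro ⟨m, hm⟩
  have hcyc : T.parent^[m + 1] v = v := by
    rw [Function.iterate_succ_apply', hm, h.1]
  obtain ⟨N, hN⟩ := T.reaches v
  have hk : ∀ k : ℕ, T.parent^[(m + 1) * k] v = v := by
    intro k
    induction k with
    | zero => rfl
    | succ k ih =>
      have : (m + 1) * (k + 1) = (m + 1) * k + (m + 1) := by ring
      rw [this, Function.iterate_add_apply, hcyc, ih]
  have hvroot : v = T.root := by
    have h1 := hk N
    have h2 : (m + 1) * N = m * N + N := by ring
    rw [h2, Function.iterate_add_apply, hN, T.root_fixed] at h1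
    exact h1.symm
  have : c = T.root := by rw [hvroot, T.root_fixed] at hm; exact hm.symm
  exact h.2 (this.trans hvroot.symm)

/-- The subtree of a child `c` of `v` is contained in `V_v`. -/
lemma sub_child_subset_Vx (T : RSTree G) {c v : V} (h : T.IsChild c v) :
    T.sub c ⊆ T.Vx v := by
  intro z hz
  refine ⟨T.anc_trans (T.child_anc h) hz, ?_⟩
  rintro rfl
  exact T.not_anc_child h hz

end RSTree

lemma ReachableWithin.refl {S : Set V} {v : V} (hv : v ∈ S) :
    ReachableWithin G S v v :=
  ⟨SimpleGraph.Walk.nil, by simpa using hv⟩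

lemma ReachableWithin.symm {S : Set V} {v w : V} (h : ReachableWithin G S v w) :
    ReachableWithin G S w v := by
  obtain ⟨p, hp⟩ := h
  exact ⟨p.reverse, fun u hu => hp u (by simpa [SimpleGraph.Walk.support_reverse] using hu)⟩

lemma ReachableWithin.trans {S : Set V} {v w z : V} (h1 : ReachableWithin G S v w)
    (h2 : ReachableWithin G S w z) : ReachableWithin G S v z := by
  obtain ⟨p, hp⟩ := h1; obtain ⟨q, hq⟩ := h2
  refine ⟨p.append q, fun u hu => ?_⟩
  rw [SimpleGraph.Walk.mem_support_append_iff] at hu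
  exact hu.elim (hp u) (hq u)

lemma ReachableWithin.mono {S S' : Set V} (hSS : S ⊆ S') {v w : V}
    (h : ReachableWithin G S v w) : ReachableWithin G S' v w := by
  obtain ⟨p, hp⟩ := h
  exact ⟨p, fun u hu => hSS (hp u hu)⟩

lemma ReachableWithin.step {S : Set V} {v w : V} (h : G.Adj v w) (hv : v ∈ S)
    (hw : w ∈ S) : ReachableWithin G S v w :=
  ⟨SimpleGraph.Walk.cons h SimpleGraph.Walk.nil, by
    intro u hu
    simp only [SimpleGraph.Walk.support_cons, SimpleGraph.Walk.support_nil,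
      List.mem_cons, List.mem_singleton] at hu
    rcases hu with rfl | rfl | h
    · exact hv
    · exact hw
    · exact absurd h List.not_mem_nil⟩

lemma ReachableWithin.end_mem {S : Set V} {v w : V} (h : ReachableWithin G S v w) :
    w ∈ S := by
  obtain ⟨p, hp⟩ := h
  exact hp w p.end_mem_support

/-- Ascending the tree: if `parent^[n] v = a` and all intermediate vertices are in `S`,
then `v` is reachable from `a` within `S`. -/
lemma reach_anc (T : RSTree G) {S : Set V} :
    ∀ (n : ℕ) (v a : V), T.parent^[n] v = a → (∀ k, k ≤ n → T.parent^[k] v ∈ S) →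
      ReachableWithin G S v a := by
  intro n
  induction n with
  | zero =>
    intro v a h hS
    subst h
    exact ReachableWithin.refl (hS 0 le_rfl)
  | succ n ih =>
    intro v a h hS
    by_cases hv : v = T.root
    · subst hv
      rw [T.root_fixed] at h
      subst h
      exact ReachableWithin.refl (hS 0 (by omega))
    · have hadj : G.Adj v (T.parent v) := (T.adj v hv).symm
      have h' : T.parent^[n] (T.parent v) = a := by
        rw [← Function.iterate_succ_apply]; exact h
      have hS' : ∀ k, k ≤ n → T.parent^[k] (T.parent v) ∈ S := by
        intro k hk
        have := hS (k + 1) (by omega)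
        rwa [Function.iterate_succ_apply] at this
      exact (ReachableWithin.step hadj (hS 0 (by omega))
        (by rw [← Function.iterate_one T.parent]; exact hS 1 (by omega))).trans
        (ih (T.parent v) a h' hS')

/-- If `a` is an ancestor of `v` and the whole subtree of `a` lies in `S`,
then `v` reaches `a` within `S`. -/
lemma reach_up (T : RSTree G) {S : Set V} {a v : V} (ha : T.Anc a v)
    (hS : T.sub a ⊆ S) : ReachableWithin G S v a := by
  obtain ⟨n, hn⟩ := ha
  refine reach_anc T n v a hn (fun k hk => hS ?_)
  refine ⟨n - k, ?_⟩
  rw [← Function.iterate_add_apply]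
  rw [show n - k + k = n by omega]
  exact hn

/-- Convert reachability in the induced subgraph to `ReachableWithin`. -/
lemma induce_reachable_to_within {S : Set V} {a b : S}
    (h : (G.induce S).Reachable a b) : ReachableWithin G S a.1 b.1 := by
  obtain ⟨q⟩ := h
  refine ⟨q.map ⟨Subtype.val, fun hadj => by simpa using hadj⟩, fun u hu => ?_⟩
  rw [SimpleGraph.Walk.support_map] at hu
  obtain ⟨⟨u', hu'⟩, _, rfl⟩ := List.mem_map.mp hu
  exact hu'

/-- Convert `ReachableWithin` to reachability in the induced subgraph. -/
lemma within_to_induce_reachable {S : Set V} :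
    ∀ {v w : V} (p : G.Walk v w), (∀ u ∈ p.support, u ∈ S) →
      ∀ (hv : v ∈ S) (hw : w ∈ S), (G.induce S).Reachable ⟨v, hv⟩ ⟨w, hw⟩ := by
  intro v w p
  induction p with
  | nil => intro _ hv hw; rfl
  | @cons v b w h p ih =>
    intro hsup hv hw
    have hb : b ∈ S := hsup b (by simp)
    have hadj : (G.induce S).Adj ⟨v, hv⟩ ⟨b, hb⟩ := by simpa using h
    exact hadj.reachable.trans
      (ih (fun u hu => hsup u (by simp [hu])) hb hw)

end Aux

section Key

open SimpleGraph

variable {V : Type*} {G : SimpleGraph V}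

/-- Key lemma: every vertex of `V_x` reaches, within `G \ {x,y}`, either the root
or the heavy child `yh` of `y`. -/
lemma key_lemma (G : SimpleGraph V) (T : RSTree G)
    (uc vc : V → Set V → V) (hgood : GoodChoice G T uc vc)
    (x y yh : V)
    (hx : x ≠ T.root) (hy : y ≠ T.root)
    (hxy : ¬ T.Anc x y) (hyx : ¬ T.Anc y x)
    (hyh : T.IsChild yh y)
    (hconx : (G.induce (({x} : Set V)ᶜ)).Connected)
    (hcony : (G.induce (({y} : Set V)ᶜ)).Connected)
    (hheavy : ∀ C, IsCompOf G (T.Vx x) C →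
      FullySens T (uc x) (vc x) (uc y) (vc y) x y C → T.Anc yh (uc x C))
    (v : V) (hv : v ∈ T.Vx x) :
    ReachableWithin G (({x, y} : Set V)ᶜ) v T.root ∨
      ReachableWithin G (({x, y} : Set V)ᶜ) v yh := by
  set S : Set V := ({x, y} : Set V)ᶜ with hSdef
  have hmemS : ∀ z : V, z ∈ S ↔ z ≠ x ∧ z ≠ y := by
    intro z; simp [hSdef, Set.mem_insert_iff, not_or]
  have hVxS : T.Vx x ⊆ S := by
    intro z hz
    rw [hmemS]
    exact ⟨hz.2, fun h => hxy (h ▸ hz.1)⟩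
  have hVyS : T.Vx y ⊆ S := by
    intro z hz
    rw [hmemS]
    exact ⟨fun h => hyx (h ▸ hz.1), hz.2⟩
  -- a vertex outside both subtrees reaches the root within S
  have houtside : ∀ z : V, z ∉ T.sub x → z ∉ T.sub y → ReachableWithin G S z T.root := by
    intro z hzx hzy
    obtain ⟨N, hN⟩ := T.reaches z
    refine reach_anc T N z T.root hN (fun k hk => ?_)
    rw [hmemS]
    constructor
    · intro h; exact hzx ⟨k, h⟩
    · intro h; exact hzy ⟨k, h⟩
  -- the component of v in G[V_x]
  set C : Set V := CompOfVert G (T.Vx x) v with hCdef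
  have hC : IsCompOf G (T.Vx x) C := ⟨v, hv, rfl⟩
  obtain ⟨hadj, hvcC, hucC⟩ := hgood x hx hconx C hC
  set u : V := uc x C with hudef
  set w : V := vc x C with hwdef
  -- v reaches w within S
  have hvw' : ReachableWithin G (T.Vx x) v w := hvcC
  have hvw : ReachableWithin G S v w := hvw'.mono hVxS
  have hwS : w ∈ S := hVxS hvw'.end_mem
  by_cases hAnc : T.Anc y u
  · by_cases hps : PseudoSens T (uc x) (vc x) (uc y) (vc y) x y C
    · -- pseudo-y-sensitive: route through the component of y' in G[V_y]
      left
      obtain ⟨y', hchild, hancy'u, hxnot⟩ := hps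
      set D : Set V := CompOfVert G (T.Vx y) y' with hDdef
      have hy'Vy : y' ∈ T.Vx y := ⟨T.child_anc hchild, hchild.2⟩
      have hD : IsCompOf G (T.Vx y) D := ⟨y', hy'Vy, rfl⟩
      obtain ⟨hadjD, hvcD, hucD⟩ := hgood y hy hcony D hD
      have hxnot' : ¬ T.Anc x (uc y D) ∧ x ≠ vc y D := by
        constructor
        · intro h; exact hxnot (Set.mem_union_left _ h)
        · intro h; exact hxnot (Set.mem_union_right _ h)
      -- uc y D is outside both subtrees, hence reaches root
      have hucDx : uc y D ∉ T.sub x := hxnot'.1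
      have hucroot : ReachableWithin G S (uc y D) T.root := houtside _ hucDx hucD
      -- y' reaches vc y D within V_y ⊆ S
      have hy'vc : ReachableWithin G S y' (vc y D) := hvcD.mono hVyS
      have hvcDS : vc y D ∈ S := hVyS (ReachableWithin.end_mem hvcD)
      have hucDS : uc y D ∈ S := by
        rw [hmemS]
        constructor
        · intro h; exact hxnot'.1 (by rw [h]; exact T.anc_refl x)
        · intro h; exact hucD (by rw [h]; exact T.anc_refl y)
      -- u reaches y' up the tree within sub y' ⊆ V_y ⊆ S
      have huy' : ReachableWithin G S u y' :=
        reach_up T hancy'u ((T.sub_child_subset_Vx hchild).trans hVyS)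
      have huS : u ∈ S := hVyS (T.sub_child_subset_Vx hchild hancy'u)
      exact hvw.trans ((ReachableWithin.step hadj.symm hwS huS).trans
        (huy'.trans (hy'vc.trans ((ReachableWithin.step hadjD.symm hvcDS hucDS).trans
          hucroot))))
    · -- fully-y-sensitive: heavy pair condition routes through yh
      right
      have hfull : FullySens T (uc x) (vc x) (uc y) (vc y) x y C :=
        ⟨Or.inl hAnc, hps⟩
      have hancyhu : T.Anc yh u := hheavy C hC hfull
      have huS : u ∈ S := hVyS (T.sub_child_subset_Vx hyh hancyhu)
      have huyh : ReachableWithin G S u yh :=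
        reach_up T hancyhu ((T.sub_child_subset_Vx hyh).trans hVyS)
      exact hvw.trans ((ReachableWithin.step hadj.symm hwS huS).trans huyh)
  · -- not y-sensitive: u is outside both subtrees
    left
    have hucy : u ∉ T.sub y := hAnc
    have huroot : ReachableWithin G S u T.root := houtside u hucC hucy
    have huS : u ∈ S := by
      rw [hmemS]
      constructor
      · intro h; exact hucC (by rw [h]; exact T.anc_refl x)
      · intro h; exact hucy (by rw [h]; exact T.anc_refl y)
    exact hvw.trans ((ReachableWithin.step hadj.symm hwS huS).trans huroot)

end Key

/-- Let `x, y` be a heavy pair (in particular an independent pair,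
both non-leaves of `T`, both `≠ s`, with `G \ {x}` and `G \ {y}` connected). Then
`G \ {x,y}` is connected if and only if at least one of the heavy children
`x_h, y_h` is connected to the source `s` in `G \ {x,y}`. -/
theorem stmt10 {V : Type*} [Fintype V] (G : SimpleGraph V) (hG : G.Connected)
    (T : RSTree G) (hch : V → V) (hhch : HchValid T hch)
    (uc vc : V → Set V → V) (hgood : GoodChoice G T uc vc)
    (x y : V) (hxy : HeavyPair T hch uc vc x y) :
    (G.induce (({x, y} : Set V)ᶜ)).Connected ↔
      (ReachableWithin G (({x, y} : Set V)ᶜ) (hch x) T.root ∨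
       ReachableWithin G (({x, y} : Set V)ᶜ) (hch y) T.root) := by
  obtain ⟨hx, hy, hxy', hyx', hchx, hchy, hconx, hcony, hheavyx, hheavyy⟩ := hxy
  set S : Set V := ({x, y} : Set V)ᶜ with hSdef
  have hmemS : ∀ z : V, z ∈ S ↔ z ≠ x ∧ z ≠ y := by
    intro z; simp [hSdef, Set.mem_insert_iff, not_or]
  have hrootS : T.root ∈ S := (hmemS _).mpr ⟨Ne.symm hx, Ne.symm hy⟩
  have hchxS : hch x ∈ S := by
    rw [hmemS]
    refine ⟨hchx.2, fun h => hxy' (by rw [← h]; exact T.child_anc hchx)⟩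
  constructor
  · intro hconn
    left
    exact induce_reachable_to_within
      (hconn.preconnected ⟨hch x, hchxS⟩ ⟨T.root, hrootS⟩)
  · intro h
    have key1 : ∀ v ∈ T.Vx x,
        ReachableWithin G S v T.root ∨ ReachableWithin G S v (hch y) :=
      fun v hv => key_lemma G T uc vc hgood x y (hch y) hx hy hxy' hyx' hchy
        hconx hcony hheavyx v hv
    have key2 : ∀ v ∈ T.Vx y,
        ReachableWithin G S v T.root ∨ ReachableWithin G S v (hch x) := by
      intro v hv
      have := key_lemma G T uc vc hgood y x (hch x) hy hx hyx' hxy' hchx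
        hcony hconx hheavyy v hv
      rwa [Set.pair_comm y x] at this
    have hchxVx : hch x ∈ T.Vx x := ⟨T.child_anc hchx, hchx.2⟩
    have hchyVy : hch y ∈ T.Vx y := ⟨T.child_anc hchy, hchy.2⟩
    have hboth : ReachableWithin G S (hch x) T.root ∧
        ReachableWithin G S (hch y) T.root := by
      rcases h with h | h
      · refine ⟨h, ?_⟩
        rcases key2 (hch y) hchyVy with h' | h'
        · exact h'
        · exact h'.trans h
      · refine ⟨?_, h⟩
        rcases key1 (hch x) hchxVx with h' | h'
        · exact h'
        · exact h'.trans h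
    have hall : ∀ v ∈ S, ReachableWithin G S v T.root := by
      intro v hvS
      by_cases hvx : v ∈ T.sub x
      · have hv : v ∈ T.Vx x := ⟨hvx, ((hmemS v).mp hvS).1⟩
        rcases key1 v hv with h' | h'
        · exact h'
        · exact h'.trans hboth.2
      · by_cases hvy : v ∈ T.sub y
        · have hv : v ∈ T.Vx y := ⟨hvy, ((hmemS v).mp hvS).2⟩
          rcases key2 v hv with h' | h'
          · exact h'
          · exact h'.trans hboth.1
        · obtain ⟨N, hN⟩ := T.reaches v
          refine reach_anc T N v T.root hN (fun k hk => ?_)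
          rw [hmemS]
          exact ⟨fun hh => hvx ⟨k, hh⟩, fun hh => hvy ⟨k, hh⟩⟩
    rw [SimpleGraph.connected_iff]
    refine ⟨?_, ⟨⟨T.root, hrootS⟩⟩⟩
    rintro ⟨a, ha⟩ ⟨b, hb⟩
    obtain ⟨p, hp⟩ := (hall a ha).trans (hall b hb).symm
    exact within_to_induce_reachable p hp ha hb
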